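/- arXiv:1803.01696 — 2 statements merged into one kernel-verified Lean document; each statement's English description precedes it below -/
import Mathlib

section
/- PAPAL is strictly more expressive than epistemic logic (and than PAL) for at least two agents: for distinct agents a, b and atom p, there is no epistemic formula φ ∈ L_EL such that for every pointed epistemic model M_s, M_s ⊨ φ if and only if M_s ⊨ ◊⁺(K_a p ∧ ¬K_b K_a p). -/
/-- An epistemic (S5) model: a nonempty set of states, an equivalence
relation for each agent, and a valuation of atoms. -/
structure EpiModel (A P : Type) where
  S : Type
  ne : Nonempty S
  rel : A → S → S → Prop
  equiv : ∀ a, Equivalence (rel a)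
  val : P → Set S

/-- Positive formulas L_EL⁺ : p | ¬p | ∧ | ∨ | K_a. -/
inductive PosForm (A P : Type) where
  | atom : P → PosForm A P
  | natom : P → PosForm A P
  | and : PosForm A P → PosForm A P → PosForm A P
  | or : PosForm A P → PosForm A P → PosForm A P
  | know : A → PosForm A P → PosForm A P

/-- Satisfaction of a positive formula, relativized to a current domain `D`
(representing the submodel of `M` induced by `D`). -/
def PosForm.sat {A P : Type} (M : EpiModel A P) : PosForm A P → Set M.S → M.S → Prop
  | .atom p, _, s => s ∈ M.val p
  | .natom p, _, s => s ∉ M.val p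
  | .and φ ψ, D, s => PosForm.sat M φ D s ∧ PosForm.sat M ψ D s
  | .or φ ψ, D, s => PosForm.sat M φ D s ∨ PosForm.sat M ψ D s
  | .know a φ, D, s => ∀ t, M.rel a s t → t ∈ D → PosForm.sat M φ D t

/-- The language L_PAPAL : atoms, ¬, ∧, K_a, announcements [ψ]φ and the
positive arbitrary-announcement quantifier □⁺. -/
inductive Form (A P : Type) where
  | atom : P → Form A P
  | neg : Form A P → Form A P
  | and : Form A P → Form A P → Form A P
  | know : A → Form A P → Form A P
  | ann : Form A P → Form A P → Form A P
  | pbox : Form A P → Form A P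

/-- Satisfaction, relativized to a current domain `D`: `Form.sat M φ D s`
means that φ holds at state `s` of the restriction of `M` to `D`.
Announcement `[ψ]φ` further restricts the domain to the states of `D`
satisfying ψ; `□⁺φ` quantifies over announcements of positive formulas. -/
def Form.sat {A P : Type} (M : EpiModel A P) : Form A P → Set M.S → M.S → Prop
  | .atom p, _, s => s ∈ M.val p
  | .neg φ, D, s => ¬ Form.sat M φ D s
  | .and φ ψ, D, s => Form.sat M φ D s ∧ Form.sat M ψ D s
  | .know a φ, D, s => ∀ t, M.rel a s t → t ∈ D → Form.sat M φ D t
  | .ann ψ φ, D, s => Form.sat M ψ D s → Form.sat M φ {t | t ∈ D ∧ Form.sat M ψ D t} s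
  | .pbox φ, D, s => ∀ χ : PosForm A P, PosForm.sat M χ D s →
      Form.sat M φ {t | t ∈ D ∧ PosForm.sat M χ D t} s

/-- Truth at a pointed model `M_s`. -/
def Sat {A P : Type} (M : EpiModel A P) (s : M.S) (φ : Form A P) : Prop :=
  Form.sat M φ Set.univ s

def Form.or {A P : Type} (φ ψ : Form A P) : Form A P := .neg (.and (.neg φ) (.neg ψ))
def Form.imp {A P : Type} (φ ψ : Form A P) : Form A P := Form.or (.neg φ) ψ
def Form.iff {A P : Type} (φ ψ : Form A P) : Form A P := .and (Form.imp φ ψ) (Form.imp ψ φ)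
def Form.pdia {A P : Type} (φ : Form A P) : Form A P := .neg (.pbox (.neg φ))
def Form.lknow {A P : Type} (a : A) (φ : Form A P) : Form A P := .neg (.know a (.neg φ))

/-- Validity on the class S5 of all epistemic models. -/
def Valid (A P : Type) (φ : Form A P) : Prop :=
  ∀ (M : EpiModel A P) (s : M.S), Sat M s φ

/-- The language L_EL of epistemic logic. -/
inductive ELForm (A P : Type) where
  | atom : P → ELForm A P
  | neg : ELForm A P → ELForm A P
  | and : ELForm A P → ELForm A P → ELForm A P
  | know : A → ELForm A P → ELForm A P

/-- Satisfaction of epistemic formulas. -/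
def ELForm.sat {A P : Type} (M : EpiModel A P) : ELForm A P → M.S → Prop
  | .atom p, s => s ∈ M.val p
  | .neg φ, s => ¬ ELForm.sat M φ s
  | .and φ ψ, s => ELForm.sat M φ s ∧ ELForm.sat M ψ s
  | .know a φ, s => ∀ t, M.rel a s t → ELForm.sat M φ t


/-! ### Auxiliary counterexample machinery -/

open Classical in
/-- Relations on a 4-state frame: agent `a` has classes `{0,2},{1,3}`,
agent `b` has classes `{0,1},{2},{3}`, all other agents have identity. -/
noncomputable def myRel (A : Type) (a b : A) : A → Fin 4 → Fin 4 → Prop :=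
  fun c x y =>
    if c = a then x.val % 2 = y.val % 2
    else if c = b then x = y ∨ (x = 0 ∧ y = 1) ∨ (x = 1 ∧ y = 0)
    else x = y

lemma myRel_a {A : Type} (a b : A) (x y : Fin 4) :
    myRel A a b a x y ↔ x.val % 2 = y.val % 2 := by
  simp [myRel]

lemma myRel_b {A : Type} (a b : A) (hab : a ≠ b) (x y : Fin 4) :
    myRel A a b b x y ↔ (x = y ∨ (x = 0 ∧ y = 1) ∨ (x = 1 ∧ y = 0)) := by
  simp [myRel, Ne.symm hab]

lemma myRel_c {A : Type} (a b c : A) (h1 : c ≠ a) (h2 : c ≠ b) (x y : Fin 4) :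
    myRel A a b c x y ↔ x = y := by
  simp [myRel, h1, h2]


lemma f4_0 {t : Fin 4} (h : t.val = 0) : t = (0 : Fin 4) := Fin.ext (by simpa using h)
lemma f4_1 {t : Fin 4} (h : t.val = 1) : t = (1 : Fin 4) := Fin.ext (by simpa using h)
lemma f4_2 {t : Fin 4} (h : t.val = 2) : t = (2 : Fin 4) := Fin.ext (by simpa using h)
lemma f4_3 {t : Fin 4} (h : t.val = 3) : t = (3 : Fin 4) := Fin.ext (by simpa using h)
lemma f4v0 : ((0 : Fin 4)).val = 0 := rfl
lemma f4v1 : ((1 : Fin 4)).val = 1 := rfl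
lemma f4v2 : ((2 : Fin 4)).val = 2 := rfl
lemma f4v3 : ((3 : Fin 4)).val = 3 := rfl

lemma myRel_equiv (A : Type) (a b : A) (c : A) : Equivalence (myRel A a b c) := by
  classical
  by_cases h1 : c = a
  · subst h1
    refine ⟨fun x => (myRel_a c b x x).mpr rfl,
      fun {x y} h => (myRel_a c b y x).mpr ((myRel_a c b x y).mp h).symm,
      fun {x y z} h h' => (myRel_a c b x z).mpr
        (((myRel_a c b x y).mp h).trans ((myRel_a c b y z).mp h'))⟩
  · by_cases h2 : c = b
    · subst h2
      have key : ∀ x y : Fin 4,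
          (x = y ∨ (x = 0 ∧ y = 1) ∨ (x = 1 ∧ y = 0)) →
          (y = x ∨ (y = 0 ∧ x = 1) ∨ (y = 1 ∧ x = 0)) := by decide
      have key2 : ∀ x y z : Fin 4,
          (x = y ∨ (x = 0 ∧ y = 1) ∨ (x = 1 ∧ y = 0)) →
          (y = z ∨ (y = 0 ∧ z = 1) ∨ (y = 1 ∧ z = 0)) →
          (x = z ∨ (x = 0 ∧ z = 1) ∨ (x = 1 ∧ z = 0)) := by decide
      refine ⟨fun x => ?_, fun {x y} h => ?_, fun {x y z} h h' => ?_⟩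
      · exact (myRel_b a c (Ne.symm h1) x x).mpr (Or.inl rfl)
      · exact (myRel_b a c (Ne.symm h1) y x).mpr
          (key x y ((myRel_b a c (Ne.symm h1) x y).mp h))
      · exact (myRel_b a c (Ne.symm h1) x z).mpr
          (key2 x y z ((myRel_b a c (Ne.symm h1) x y).mp h)
            ((myRel_b a c (Ne.symm h1) y z).mp h'))
    · refine ⟨fun x => ?_, fun {x y} h => ?_, fun {x y z} h h' => ?_⟩
      · exact (myRel_c a b c h1 h2 x x).mpr rfl
      · exact (myRel_c a b c h1 h2 y x).mpr ((myRel_c a b c h1 h2 x y).mp h).symm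
      · exact (myRel_c a b c h1 h2 x z).mpr
          (((myRel_c a b c h1 h2 x y).mp h).trans ((myRel_c a b c h1 h2 y z).mp h'))

open Classical in
/-- The 4-state model: `p` holds at `0,1`, `q` has extension `vq`,
all other atoms hold everywhere. -/
noncomputable def myMdl (A P : Type) (a b : A) (p q : P) (vq : Set (Fin 4)) :
    EpiModel A P where
  S := Fin 4
  ne := ⟨0⟩
  rel := myRel A a b
  equiv := myRel_equiv A a b
  val := fun r => if r = p then {s | s.val < 2} else if r = q then vq else Set.univ

lemma myVal_p {A P : Type} (a b : A) (p q : P) (vq : Set (Fin 4)) (s : Fin 4) :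
    s ∈ (myMdl A P a b p q vq).val p ↔ s.val < 2 := by
  classical
  show s ∈ (if p = p then {s : Fin 4 | s.val < 2} else
    if p = q then vq else Set.univ) ↔ s.val < 2
  rw [if_pos rfl]
  exact Iff.rfl

lemma myVal_q {A P : Type} (a b : A) (p q : P) (hqp : q ≠ p) (vq : Set (Fin 4))
    (s : Fin 4) : s ∈ (myMdl A P a b p q vq).val q ↔ s ∈ vq := by
  classical
  show s ∈ (if q = p then {s : Fin 4 | s.val < 2} else
    if q = q then vq else Set.univ) ↔ s ∈ vq
  rw [if_neg hqp, if_pos rfl]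

/-- Atoms occurring in an EL formula. -/
def ELForm.atoms {A P : Type} : ELForm A P → List P
  | .atom r => [r]
  | .neg φ => φ.atoms
  | .and φ ψ => φ.atoms ++ ψ.atoms
  | .know _ φ => φ.atoms

/-- EL formulas not mentioning `q` cannot distinguish the two models. -/
lemma el_sat_congr {A P : Type} (a b : A) (p q : P) (v1 v2 : Set (Fin 4))
    (φ : ELForm A P) (hq : q ∉ φ.atoms) (s : Fin 4) :
    ELForm.sat (myMdl A P a b p q v1) φ s ↔ ELForm.sat (myMdl A P a b p q v2) φ s := by
  classical
  induction φ generalizing s with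
  | atom r =>
      have hr : r ≠ q := by
        intro h; exact hq (by simp [ELForm.atoms, h])
      show s ∈ (if r = p then {s : Fin 4 | s.val < 2} else
          if r = q then v1 else Set.univ) ↔
        s ∈ (if r = p then {s : Fin 4 | s.val < 2} else
          if r = q then v2 else Set.univ)
      by_cases hp : r = p
      · rw [if_pos hp, if_pos hp]
      · rw [if_neg hp, if_neg hp, if_neg hr, if_neg hr]
  | neg φ ih =>
      show ¬ _ ↔ ¬ _
      exact not_congr (ih (by simpa [ELForm.atoms] using hq) s)
  | and φ ψ ihφ ihψ =>
      simp only [ELForm.atoms, List.mem_append] at hq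
      push_neg at hq
      exact and_congr (ihφ hq.1 s) (ihψ hq.2 s)
  | know c φ ih =>
      show (∀ t : Fin 4, myRel A a b c s t → _) ↔ (∀ t : Fin 4, myRel A a b c s t → _)
      exact forall_congr' fun t => imp_congr Iff.rfl
        (ih (by simpa [ELForm.atoms] using hq) t)

/-- In the model where `q` holds at `{0,1,3}`, `◊⁺(K_a p ∧ ¬K_b K_a p)` is true at `0`:
announce `q`. -/
lemma pdia_true {A P : Type} (a b : A) (hab : a ≠ b) (p q : P) (hqp : q ≠ p) :
    Sat (myMdl A P a b p q {s | s ≠ 2}) ((0 : Fin 4))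
      (Form.pdia (.and (.know a (.atom p))
        (.neg (.know b (.know a (.atom p)))))) := by
  classical
  intro h
  have hq0 : PosForm.sat (myMdl A P a b p q {s | s ≠ 2}) (PosForm.atom q)
      Set.univ ((0 : Fin 4)) :=
    (myVal_q a b p q hqp _ _).mpr (by decide : (0 : Fin 4) ≠ 2)
  have hneg := h (PosForm.atom q) hq0
  apply hneg
  constructor
  · -- K_a p at 0 in the restriction
    intro t hat htD
    have hat' : ((0 : Fin 4)).val % 2 = (t : Fin 4).val % 2 :=
      (myRel_a a b _ _).mp hat
    have htq : t ≠ (2 : Fin 4) := (myVal_q a b p q hqp _ _).mp htD.2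
    show (t : Fin 4) ∈ (myMdl A P a b p q {s | s ≠ 2}).val p
    refine (myVal_p a b p q _ t).mpr ?_
    have hlt := (t : Fin 4).isLt
    rcases (by have e0 := f4v0; have e1 := f4v1; have e2 := f4v2; have e3 := f4v3; omega : (t : Fin 4).val = 0 ∨ (t : Fin 4).val = 2) with ht | ht
    · omega
    · exact absurd (f4_2 ht) htq
  · -- ¬ K_b K_a p at 0 in the restriction
    intro hk
    have hb01 : myRel A a b b 0 1 :=
      (myRel_b a b hab 0 1).mpr (Or.inr (Or.inl ⟨rfl, rfl⟩))
    have h1D : ((1 : Fin 4)) ∈ {t | t ∈ Set.univ ∧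
        PosForm.sat (myMdl A P a b p q {s | s ≠ 2}) (PosForm.atom q) Set.univ t} :=
      ⟨trivial, (myVal_q a b p q hqp _ _).mpr (by decide : (1 : Fin 4) ≠ 2)⟩
    have ha13 : myRel A a b a 1 3 := (myRel_a a b 1 3).mpr (by decide)
    have h3D : ((3 : Fin 4)) ∈ {t | t ∈ Set.univ ∧
        PosForm.sat (myMdl A P a b p q {s | s ≠ 2}) (PosForm.atom q) Set.univ t} :=
      ⟨trivial, (myVal_q a b p q hqp _ _).mpr (by decide : (3 : Fin 4) ≠ 2)⟩
    have h3p := hk ((1 : Fin 4)) hb01 h1D ((3 : Fin 4)) ha13 h3D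
    exact absurd ((myVal_p a b p q _ _).mp h3p) (by decide)

/-- Invariant for the model where `q` holds everywhere: every positive formula
true at `3` is true at `2`, and every positive formula true at `1` is true at `0`. -/
lemma pos_inv {A P : Type} (a b : A) (p q : P) (χ : PosForm A P) :
    (PosForm.sat (myMdl A P a b p q Set.univ) χ Set.univ ((3 : Fin 4)) →
      PosForm.sat (myMdl A P a b p q Set.univ) χ Set.univ ((2 : Fin 4))) ∧
    (PosForm.sat (myMdl A P a b p q Set.univ) χ Set.univ ((1 : Fin 4)) →
      PosForm.sat (myMdl A P a b p q Set.univ) χ Set.univ ((0 : Fin 4))) := by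
  classical
  induction χ with
  | atom r =>
      show ((3 : Fin 4) ∈ (if r = p then {s : Fin 4 | s.val < 2} else
          if r = q then Set.univ else Set.univ) →
        (2 : Fin 4) ∈ (if r = p then {s : Fin 4 | s.val < 2} else
          if r = q then Set.univ else Set.univ)) ∧
        ((1 : Fin 4) ∈ (if r = p then {s : Fin 4 | s.val < 2} else
          if r = q then Set.univ else Set.univ) →
        (0 : Fin 4) ∈ (if r = p then {s : Fin 4 | s.val < 2} else
          if r = q then Set.univ else Set.univ))
      by_cases hp : r = p
      · rw [if_pos hp]
        exact ⟨fun h => absurd (show ((3 : Fin 4)).val < 2 from h) (by decide),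
          fun _ => show ((0 : Fin 4)).val < 2 by decide⟩
      · rw [if_neg hp]
        split_ifs <;> exact ⟨fun _ => trivial, fun _ => trivial⟩
  | natom r =>
      show ((3 : Fin 4) ∉ (if r = p then {s : Fin 4 | s.val < 2} else
          if r = q then Set.univ else Set.univ) →
        (2 : Fin 4) ∉ (if r = p then {s : Fin 4 | s.val < 2} else
          if r = q then Set.univ else Set.univ)) ∧
        ((1 : Fin 4) ∉ (if r = p then {s : Fin 4 | s.val < 2} else
          if r = q then Set.univ else Set.univ) →
        (0 : Fin 4) ∉ (if r = p then {s : Fin 4 | s.val < 2} else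
          if r = q then Set.univ else Set.univ))
      by_cases hp : r = p
      · rw [if_pos hp]
        exact ⟨fun _ => (show ¬ ((2 : Fin 4)).val < 2 by decide),
          fun h => absurd (show ((1 : Fin 4)).val < 2 by decide) h⟩
      · rw [if_neg hp]
        split_ifs <;> exact ⟨fun h => h, fun h => h⟩
  | and φ ψ ihφ ihψ =>
      exact ⟨fun h => ⟨ihφ.1 h.1, ihψ.1 h.2⟩, fun h => ⟨ihφ.2 h.1, ihψ.2 h.2⟩⟩
  | or φ ψ ihφ ihψ =>
      exact ⟨fun h => h.elim (fun h => Or.inl (ihφ.1 h)) (fun h => Or.inr (ihψ.1 h)),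
             fun h => h.elim (fun h => Or.inl (ihφ.2 h)) (fun h => Or.inr (ihψ.2 h))⟩
  | know c φ ih =>
      constructor
      · intro H t hct _
        by_cases h1 : c = a
        · subst h1
          have c1 : PosForm.sat (myMdl A P c b p q Set.univ) φ Set.univ ((1 : Fin 4)) :=
            H ((1 : Fin 4)) ((myRel_a c b _ _).mpr (by decide)) trivial
          have c3 : PosForm.sat (myMdl A P c b p q Set.univ) φ Set.univ ((3 : Fin 4)) :=
            H ((3 : Fin 4)) ((myRel_a c b _ _).mpr (by decide)) trivial
          have hct' := (myRel_a c b _ _).mp hct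
          have hlt := (t : Fin 4).isLt
          rcases (by have e0 := f4v0; have e1 := f4v1; have e2 := f4v2; have e3 := f4v3; omega : (t : Fin 4).val = 0 ∨ (t : Fin 4).val = 2) with ht | ht
          · exact (f4_0 ht) ▸ ih.2 c1
          · exact (f4_2 ht) ▸ ih.1 c3
        · by_cases h2 : c = b
          · subst h2
            have hct' := (myRel_b a c (Ne.symm h1) _ _).mp hct
            have ht2 : t = (2 : Fin 4) := by
              rcases hct' with ht | ⟨ht, _⟩ | ⟨ht, _⟩
              · exact ht.symm
              · exact absurd ht (by decide)
              · exact absurd ht (by decide)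
            have c3 : PosForm.sat (myMdl A P a c p q Set.univ) φ Set.univ ((3 : Fin 4)) :=
              H ((3 : Fin 4)) ((myRel_b a c (Ne.symm h1) _ _).mpr (Or.inl rfl)) trivial
            exact ht2 ▸ ih.1 c3
          · have hct' := (myRel_c a b c h1 h2 _ _).mp hct
            have c3 : PosForm.sat (myMdl A P a b p q Set.univ) φ Set.univ ((3 : Fin 4)) :=
              H ((3 : Fin 4)) ((myRel_c a b c h1 h2 _ _).mpr rfl) trivial
            exact hct' ▸ ih.1 c3
      · intro H t hct _
        by_cases h1 : c = a
        · subst h1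
          have c1 : PosForm.sat (myMdl A P c b p q Set.univ) φ Set.univ ((1 : Fin 4)) :=
            H ((1 : Fin 4)) ((myRel_a c b _ _).mpr (by decide)) trivial
          have c3 : PosForm.sat (myMdl A P c b p q Set.univ) φ Set.univ ((3 : Fin 4)) :=
            H ((3 : Fin 4)) ((myRel_a c b _ _).mpr (by decide)) trivial
          have hct' := (myRel_a c b _ _).mp hct
          have hlt := (t : Fin 4).isLt
          rcases (by have e0 := f4v0; have e1 := f4v1; have e2 := f4v2; have e3 := f4v3; omega : (t : Fin 4).val = 0 ∨ (t : Fin 4).val = 2) with ht | ht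
          · exact (f4_0 ht) ▸ ih.2 c1
          · exact (f4_2 ht) ▸ ih.1 c3
        · by_cases h2 : c = b
          · subst h2
            have hct' := (myRel_b a c (Ne.symm h1) _ _).mp hct
            have ht01 : t = (0 : Fin 4) ∨ t = (1 : Fin 4) := by
              rcases hct' with ht | ⟨_, ht⟩ | ⟨ht, _⟩
              · exact Or.inl ht.symm
              · exact Or.inr ht
              · exact absurd ht (by decide)
            have c0 : PosForm.sat (myMdl A P a c p q Set.univ) φ Set.univ ((0 : Fin 4)) :=
              H ((0 : Fin 4)) ((myRel_b a c (Ne.symm h1) _ _).mpr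
                (Or.inr (Or.inr ⟨rfl, rfl⟩))) trivial
            have c1 : PosForm.sat (myMdl A P a c p q Set.univ) φ Set.univ ((1 : Fin 4)) :=
              H ((1 : Fin 4)) ((myRel_b a c (Ne.symm h1) _ _).mpr (Or.inl rfl)) trivial
            rcases ht01 with ht | ht
            · exact ht ▸ c0
            · exact ht ▸ c1
          · have hct' := (myRel_c a b c h1 h2 _ _).mp hct
            have c1 : PosForm.sat (myMdl A P a b p q Set.univ) φ Set.univ ((1 : Fin 4)) :=
              H ((1 : Fin 4)) ((myRel_c a b c h1 h2 _ _).mpr rfl) trivial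
            exact hct' ▸ ih.2 c1

/-- In the model where `q` holds everywhere, `◊⁺(K_a p ∧ ¬K_b K_a p)` is false at `0`. -/
lemma pdia_false {A P : Type} (a b : A) (p q : P) :
    ¬ Sat (myMdl A P a b p q Set.univ) ((0 : Fin 4))
      (Form.pdia (.and (.know a (.atom p))
        (.neg (.know b (.know a (.atom p)))))) := by
  classical
  intro h
  apply h
  intro χ _ hθ
  obtain ⟨hKa, hnKb⟩ := hθ
  have h2 : ¬ PosForm.sat (myMdl A P a b p q Set.univ) χ Set.univ ((2 : Fin 4)) := by
    intro h2
    have hmem := hKa ((2 : Fin 4)) ((myRel_a a b 0 2).mpr (by decide)) ⟨trivial, h2⟩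
    exact absurd ((myVal_p a b p q _ _).mp hmem) (by decide)
  apply hnKb
  intro t _ _ u _ huD
  show (u : Fin 4) ∈ (myMdl A P a b p q Set.univ).val p
  refine (myVal_p a b p q _ u).mpr ?_
  by_contra hu
  have hlt := (u : Fin 4).isLt
  rcases (by have e0 := f4v0; have e1 := f4v1; have e2 := f4v2; have e3 := f4v3; omega : (u : Fin 4).val = 2 ∨ (u : Fin 4).val = 3) with h' | h'
  · exact h2 ((f4_2 h') ▸ huD.2)
  · exact h2 ((pos_inv a b p q χ).1 ((f4_3 h') ▸ huD.2))

/-- PAPAL is strictly more expressive than epistemic logic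
(hence than PAL) for at least two agents: no epistemic formula is equivalent,
on all pointed epistemic models, to `◊⁺(K_a p ∧ ¬K_b K_a p)`. -/
theorem papal_more_expressive_than_el
    (A P : Type) [Countable A] [Countable P] [Infinite P]
    (a b : A) (hab : a ≠ b) (p : P) :
    ¬ ∃ φ : ELForm A P, ∀ (M : EpiModel A P) (s : M.S),
        ELForm.sat M φ s ↔
          Sat M s (Form.pdia (.and (.know a (.atom p))
            (.neg (.know b (.know a (.atom p)))))) := by
  rintro ⟨φ, hφ⟩
  obtain ⟨q, hq⟩ : ∃ q : P, q ∉ p :: ELForm.atoms φ := by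
    have hfin : {x : P | x ∈ p :: ELForm.atoms φ}.Finite :=
      (p :: ELForm.atoms φ).finite_toSet
    obtain ⟨q, hq⟩ := hfin.infinite_compl.nonempty
    exact ⟨q, hq⟩
  have hqp : q ≠ p := fun h => hq (by simp [h])
  have hqφ : q ∉ ELForm.atoms φ := fun h => hq (by simp [h])
  have h1 : ELForm.sat (myMdl A P a b p q {s | s ≠ 2}) φ ((0 : Fin 4)) :=
    (hφ (myMdl A P a b p q {s | s ≠ 2}) ((0 : Fin 4))).2 (pdia_true a b hab p q hqp)
  have h2 : ELForm.sat (myMdl A P a b p q Set.univ) φ ((0 : Fin 4)) :=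
    (el_sat_congr a b p q _ Set.univ φ hqφ ((0 : Fin 4))).1 h1
  exact pdia_false a b p q ((hφ (myMdl A P a b p q Set.univ) ((0 : Fin 4))).1 h2)
end

section
/- Let M^ω be the epistemic model with domain ℕ ⊎ ℕ' (two disjoint copies of ℕ, writing i' for elements of the second copy), where ∼_a is the reflexive-symmetric closure of {(2i, 2i+1) : i ∈ ℕ} ∪ {(2i', (2i+1)') : i ∈ ℕ}, ∼_b is the reflexive-symmetric closure of {(2i+1, 2i+2) : i ∈ ℕ} ∪ {((2i+1)', (2i+2)') : i ∈ ℕ} ∪ {(0, 0')}, and V(p) = {0, 0'}. Then for all restrictions M and N of M^ω, all states s of M and t of N, and all k ∈ ℕ: if M_s and N_t are k-bisimilar, then for every formula φ ∈ L_PAPAL of epistemic depth d(φ) ≤ k, M_s ⊨ φ if and only if N_t ⊨ φ. -/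
/-- Epistemic depth: counts nested knowledge operators (ignoring □⁺). -/
def Form.depth {A P : Type} : Form A P → ℕ
  | .atom _ => 0
  | .neg φ => Form.depth φ
  | .and φ ψ => max (Form.depth φ) (Form.depth ψ)
  | .know _ φ => Form.depth φ + 1
  | .ann φ ψ => Form.depth φ + Form.depth ψ
  | .pbox φ => Form.depth φ

/-- The restriction of a model to a nonempty subset of its domain. -/
def EpiModel.restrict {A P : Type} (M : EpiModel A P) (D : Set M.S)
    (h : D.Nonempty) : EpiModel A P where
  S := D
  ne := ⟨⟨h.choose, h.choose_spec⟩⟩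
  rel a s t := M.rel a s.1 t.1
  equiv a := ⟨fun s => (M.equiv a).refl s.1, fun h' => (M.equiv a).symm h',
    fun h1 h2 => (M.equiv a).trans h1 h2⟩
  val p := {s | s.1 ∈ M.val p}

/-- `IsNBisim M N n R`: `R` is an `n`-bisimulation between `M` and `N`. -/
def IsNBisim {A P : Type} (M N : EpiModel A P) : ℕ → (M.S → N.S → Prop) → Prop
  | 0, R => (∃ s t, R s t) ∧ ∀ s t, R s t → ∀ p, s ∈ M.val p ↔ t ∈ N.val p
  | n+1, R => (∃ s t, R s t) ∧ ∀ s t, R s t →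
      (∀ p, s ∈ M.val p ↔ t ∈ N.val p) ∧
      ∀ a, ∃ R' : M.S → N.S → Prop,
        (∀ u v, R u v → R' u v) ∧ IsNBisim M N n R' ∧
        (∀ s', M.rel a s s' → ∃ t', N.rel a t t' ∧ R' s' t') ∧
        (∀ t', N.rel a t t' → ∃ s', M.rel a s s' ∧ R' s' t')

/-- The epistemic model with domain ℕ ⊎ ℕ determined by relations `rel` and
valuation `V`. -/
abbrev doubleChainModel (A P : Type) (rel : A → (ℕ ⊕ ℕ) → (ℕ ⊕ ℕ) → Prop)
    (hequiv : ∀ c, Equivalence (rel c)) (V : P → Set (ℕ ⊕ ℕ)) : EpiModel A P :=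
  ⟨ℕ ⊕ ℕ, ⟨.inl 0⟩, rel, hequiv, V⟩
namespace DCN

open Sum

abbrev W := ℕ ⊕ ℕ

/-- Position of a state (forgetting which copy of ℕ it lives in). -/
def pos : W → ℕ := Sum.elim id id

/-- The state on the same side as `x` at position `n`. -/
def smk : W → ℕ → W := fun x n => Sum.elim (fun _ => Sum.inl n) (fun _ => Sum.inr n) x

@[simp] lemma pos_inl (n : ℕ) : pos (Sum.inl n : W) = n := rfl
@[simp] lemma pos_inr (n : ℕ) : pos (Sum.inr n : W) = n := rfl
@[simp] lemma smk_inl (m n : ℕ) : smk (Sum.inl m : W) n = Sum.inl n := rfl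
@[simp] lemma smk_inr (m n : ℕ) : smk (Sum.inr m : W) n = Sum.inr n := rfl
@[simp] lemma pos_smk (x : W) (n : ℕ) : pos (smk x n) = n := by cases x <;> rfl
@[simp] lemma smk_smk (x : W) (m n : ℕ) : smk (smk x m) n = smk x n := by cases x <;> rfl
@[simp] lemma smk_pos (x : W) : smk x (pos x) = x := by cases x <;> rfl

/-- `Conn D x` : the whole interval below `x` (on `x`'s side) lies in `D`. -/
def Conn (D : Set W) (x : W) : Prop := ∀ j, j ≤ pos x → smk x j ∈ D

lemma Conn.mem {D : Set W} {x : W} (h : Conn D x) : x ∈ D := by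
  simpa using h (pos x) le_rfl

lemma Conn.smk {D : Set W} {x : W} (h : Conn D x) {j : ℕ} (hj : j ≤ pos x) :
    Conn D (smk x j) := by
  intro i hi
  rw [smk_smk]
  exact h i (le_trans (by simpa using hi) hj)

lemma conn_of_pos_zero {D : Set W} {x : W} (hx : pos x = 0) (hm : x ∈ D) : Conn D x := by
  intro j hj
  have : j = 0 := by omega
  subst this
  have : smk x 0 = x := by rw [← hx, smk_pos]
  rwa [this]

/-- Bundled context: the hypotheses of the main theorem. -/
structure Ctx (A P : Type) where
  a : A
  b : A
  htwo : ∀ c : A, c = a ∨ c = b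
  p : P
  rel : A → W → W → Prop
  hequiv : ∀ c, Equivalence (rel c)
  hrela : ∀ s t : W, rel a s t ↔ (s = t ∨ ∃ i : ℕ,
      (s = Sum.inl (2*i) ∧ t = Sum.inl (2*i+1)) ∨
      (t = Sum.inl (2*i) ∧ s = Sum.inl (2*i+1)) ∨
      (s = Sum.inr (2*i) ∧ t = Sum.inr (2*i+1)) ∨
      (t = Sum.inr (2*i) ∧ s = Sum.inr (2*i+1)))
  hrelb : ∀ s t : W, rel b s t ↔ (s = t ∨
      (s = Sum.inl 0 ∧ t = Sum.inr 0) ∨ (t = Sum.inl 0 ∧ s = Sum.inr 0) ∨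
      ∃ i : ℕ,
      (s = Sum.inl (2*i+1) ∧ t = Sum.inl (2*i+2)) ∨
      (t = Sum.inl (2*i+1) ∧ s = Sum.inl (2*i+2)) ∨
      (s = Sum.inr (2*i+1) ∧ t = Sum.inr (2*i+2)) ∨
      (t = Sum.inr (2*i+1) ∧ s = Sum.inr (2*i+2)))
  V : P → Set W
  hVp : V p = {Sum.inl 0, Sum.inr 0}
  hVq : ∀ q : P, q ≠ p → V q = ∅

namespace Ctx

variable {A P : Type} (C : Ctx A P)

lemma rel_refl (c : A) (x : W) : C.rel c x x := (C.hequiv c).refl x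

lemma rel_symm {c : A} {x y : W} (h : C.rel c x y) : C.rel c y x := (C.hequiv c).symm h

/-- membership in `V p` is "position 0". -/
lemma mem_Vp_iff (x : W) : x ∈ C.V C.p ↔ pos x = 0 := by
  rw [C.hVp]
  cases x with
  | inl n => simp [Set.mem_insert_iff]
  | inr n => simp [Set.mem_insert_iff]

/-- Case analysis on edges: equal, one step up, one step down (same side), or
the crossing edge between the two position-0 states. -/
lemma rel_cases {c : A} {x y : W} (h : C.rel c x y) :
    x = y ∨ y = smk x (pos x + 1) ∨ x = smk y (pos y + 1) ∨ (pos x = 0 ∧ pos y = 0) := by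
  rcases C.htwo c with rfl | rfl
  · rcases (C.hrela x y).mp h with rfl | ⟨i, h1 | h1 | h1 | h1⟩
    · exact Or.inl rfl
    all_goals {
      obtain ⟨rfl, rfl⟩ := h1
      simp [smk, pos]
    }
  · rcases (C.hrelb x y).mp h with rfl | h1 | h1 | ⟨i, h1 | h1 | h1 | h1⟩
    · exact Or.inl rfl
    · obtain ⟨rfl, rfl⟩ := h1; simp [pos]
    · obtain ⟨rfl, rfl⟩ := h1; simp [pos]
    all_goals {
      obtain ⟨rfl, rfl⟩ := h1
      simp [smk, pos]
    }

/-- Down-edge replay: an edge from position `e+1` down to `e` for agent `c`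
can be replayed at any state of position `e+1` (on any side). -/
lemma rel_replay_down {c : A} {x : W} {e : ℕ} (h : C.rel c x (smk x e))
    (hx : pos x = e + 1) (z : W) (hz : pos z = e + 1) : C.rel c z (smk z e) := by
  rcases C.htwo c with rfl | rfl
  · rw [C.hrela]
    rcases (C.hrela x (smk x e)).mp h with heq | ⟨i, h1 | h1 | h1 | h1⟩
    · exfalso; have := congrArg pos heq; rw [hx, pos_smk] at this; omega
    all_goals (
      refine Or.inr ⟨i, ?_⟩
      obtain ⟨h2, h3⟩ := h1
      have e1 := congrArg pos h2
      have e2 := congrArg pos h3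
      simp [hx] at e1 e2 )
    -- h1 : x = inl 2i ∧ smk x e = inl (2i+1) : then e+1 = 2i, e = 2i+1, impossible
    · omega
    · -- smk x e = inl 2i, x = inl (2i+1) : e = 2i, e+1 = 2i+1
      cases z with
      | inl m =>
        have : m = 2*i+1 := by simpa using hz.trans (by omega)
        subst this
        right; left; exact ⟨by simp [smk]; omega, rfl⟩
      | inr m =>
        have : m = 2*i+1 := by simpa using hz.trans (by omega)
        subst this
        right; right; right; exact ⟨by simp [smk]; omega, rfl⟩
    · omega
    · cases z with
      | inl m =>
        have : m = 2*i+1 := by simpa using hz.trans (by omega)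
        subst this
        right; left; exact ⟨by simp [smk]; omega, rfl⟩
      | inr m =>
        have : m = 2*i+1 := by simpa using hz.trans (by omega)
        subst this
        right; right; right; exact ⟨by simp [smk]; omega, rfl⟩
  · rw [C.hrelb]
    rcases (C.hrelb x (smk x e)).mp h with heq | h1 | h1 | ⟨i, h1 | h1 | h1 | h1⟩
    · exfalso; have := congrArg pos heq; rw [hx, pos_smk] at this; omega
    · exfalso; obtain ⟨rfl, h3⟩ := h1; simp [pos] at hx
    · exfalso; obtain ⟨h2, rfl⟩ := h1; simp [pos] at hx
    all_goals (
      obtain ⟨h2, h3⟩ := h1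
      have e1 := congrArg pos h2
      have e2 := congrArg pos h3
      simp [hx] at e1 e2 )
    · omega
    · refine Or.inr <| Or.inr <| Or.inr ⟨i, ?_⟩
      cases z with
      | inl m =>
        have : m = 2*i+2 := by simpa using hz.trans (by omega)
        subst this
        right; left; exact ⟨by simp [smk]; omega, rfl⟩
      | inr m =>
        have : m = 2*i+2 := by simpa using hz.trans (by omega)
        subst this
        right; right; right; exact ⟨by simp [smk]; omega, rfl⟩
    · omega
    · refine Or.inr <| Or.inr <| Or.inr ⟨i, ?_⟩
      cases z with
      | inl m =>
        have : m = 2*i+2 := by simpa using hz.trans (by omega)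
        subst this
        right; left; exact ⟨by simp [smk]; omega, rfl⟩
      | inr m =>
        have : m = 2*i+2 := by simpa using hz.trans (by omega)
        subst this
        right; right; right; exact ⟨by simp [smk]; omega, rfl⟩

end Ctx

end DCN
namespace DCN
namespace Ctx

variable {A P : Type} (C : Ctx A P)

/-- Up-edge replay. -/
lemma rel_replay_up {c : A} {x : W} (h : C.rel c x (smk x (pos x + 1)))
    (z : W) (hz : pos z = pos x) : C.rel c z (smk z (pos z + 1)) := by
  have h' : C.rel c (smk x (pos x + 1)) (smk (smk x (pos x + 1)) (pos x)) := by
    simpa using C.rel_symm h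
  have h2 := C.rel_replay_down h' (by simp) (smk z (pos z + 1)) (by simp [hz])
  rw [smk_smk, ← hz, smk_pos] at h2
  exact C.rel_symm h2

/-- Neighbours of a position-0 state: itself, position 1 on its own side,
or the other position-0 state. -/
lemma rel_nbr_of_p {c : A} {x y : W} (h : C.rel c x y) (hx : pos x = 0) :
    y = x ∨ y = smk x 1 ∨ pos y = 0 := by
  rcases C.rel_cases h with rfl | h1 | h1 | h1
  · exact Or.inl rfl
  · rw [hx] at h1; exact Or.inr (Or.inl h1)
  · exfalso; have := congrArg pos h1; rw [hx, pos_smk] at this; omega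
  · exact Or.inr (Or.inr h1.2)

/-- If `z'` is connected (interval present) and `y` is a neighbour of `z'`
inside `D`, then `y` is connected too. -/
lemma conn_step {D : Set W} {c : A} {y z' : W} (h : C.rel c y z')
    (hz : Conn D z') (hy : y ∈ D) : Conn D y := by
  rcases C.rel_cases h with rfl | h1 | h1 | h1
  · exact hz
  · -- z' = smk y (pos y + 1) : y is one below z'
    intro j hj
    have : smk y j = smk z' j := by rw [h1]; simp
    rw [this]
    exact hz j (by rw [h1]; simp; omega)
  · -- y = smk z' (pos z' + 1) : y is one above z'
    intro j hj
    rcases Nat.lt_or_ge j (pos y) with hlt | hge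
    · have hj' : j ≤ pos z' := by
        have := congrArg pos h1; rw [pos_smk] at this; omega
      have : smk y j = smk z' j := by rw [h1]; simp
      rw [this]
      exact hz j hj'
    · have : j = pos y := by omega
      subst this
      rwa [smk_pos]
  · exact conn_of_pos_zero h1.1 hy

end Ctx

section Sat

variable {A P : Type} (C : Ctx A P)

/-- The base model. -/
def mdl : EpiModel A P := doubleChainModel A P C.rel C.hequiv C.V

/-- Positive satisfaction in the base model, relativized to a domain. -/
def satP (χ : PosForm A P) (D : Set W) (x : W) : Prop := PosForm.sat (mdl C) χ D x

/-- Satisfaction in the base model, relativized to a domain. -/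
def satB (φ : Form A P) (D : Set W) (x : W) : Prop := Form.sat (mdl C) φ D x

@[simp] lemma satP_atom (q : P) (D : Set W) (x : W) : satP C (.atom q) D x ↔ x ∈ C.V q :=
  Iff.rfl
@[simp] lemma satP_natom (q : P) (D : Set W) (x : W) : satP C (.natom q) D x ↔ x ∉ C.V q :=
  Iff.rfl
@[simp] lemma satP_and (χ₁ χ₂ : PosForm A P) (D : Set W) (x : W) :
    satP C (.and χ₁ χ₂) D x ↔ satP C χ₁ D x ∧ satP C χ₂ D x := Iff.rfl
@[simp] lemma satP_or (χ₁ χ₂ : PosForm A P) (D : Set W) (x : W) :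
    satP C (.or χ₁ χ₂) D x ↔ satP C χ₁ D x ∨ satP C χ₂ D x := Iff.rfl
@[simp] lemma satP_know (c : A) (χ : PosForm A P) (D : Set W) (x : W) :
    satP C (.know c χ) D x ↔ ∀ y, C.rel c x y → y ∈ D → satP C χ D y := Iff.rfl

/-- The simulation relation for the positivity lemma. -/
def Zrel (D D' : Set W) (x y : W) : Prop :=
  x ∈ D ∧ y ∈ D' ∧
    ((pos x = 0 ∧ pos y = 0 ∧ ((∃ w', w' ∈ D' ∧ pos w' = 1) → smk x 1 ∈ D))
      ∨ (pos x ≠ 0 ∧ pos y ≠ 0 ∧ (Conn D' y → Conn D x ∧ pos x ≤ pos y)))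

/-- **Positivity simulation lemma**: positive truth is transported along `Zrel`. -/
lemma sim (χ : PosForm A P) : ∀ {D D' : Set W} {x y : W},
    Zrel D D' x y → satP C χ D x → satP C χ D' y := by
  induction χ with
  | atom q =>
    intro D D' x y hZ hx
    simp only [satP_atom] at hx ⊢
    by_cases hq : q = C.p
    · subst hq
      rw [C.mem_Vp_iff] at hx ⊢
      rcases hZ.2.2 with h | h
      · exact h.2.1
      · exact absurd hx h.1
    · rw [C.hVq q hq] at hx; exact absurd hx (Set.notMem_empty x)
  | natom q =>
    intro D D' x y hZ hx
    simp only [satP_natom] at hx ⊢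
    by_cases hq : q = C.p
    · subst hq
      rw [C.mem_Vp_iff] at hx ⊢
      rcases hZ.2.2 with h | h
      · exact absurd h.1 hx
      · exact h.2.1
    · rw [C.hVq q hq]; exact Set.notMem_empty y
  | and χ₁ χ₂ ih₁ ih₂ =>
    intro D D' x y hZ hx
    exact ⟨ih₁ hZ hx.1, ih₂ hZ hx.2⟩
  | or χ₁ χ₂ ih₁ ih₂ =>
    intro D D' x y hZ hx
    rcases hx with hx | hx
    · exact Or.inl (ih₁ hZ hx)
    · exact Or.inr (ih₂ hZ hx)
  | know c χ ih =>
    intro D D' x y hZ hx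
    obtain ⟨hxD, hyD, hcase⟩ := hZ
    intro z' hrel hz'
    rcases hcase with ⟨hpx, hpy, hcond⟩ | ⟨hpx, hpy, hcon⟩
    · -- p-case
      rcases C.rel_nbr_of_p hrel hpy with rfl | rfl | hz0
      · -- z' = y
        exact ih ⟨hxD, hyD, Or.inl ⟨hpx, hpy, hcond⟩⟩ (hx x (C.rel_refl c x) hxD)
      · -- z' = smk y 1
        have hw1 : smk x 1 ∈ D := hcond ⟨smk y 1, hz', by simp⟩
        have hrelx : C.rel c x (smk x 1) := by
          have h' : C.rel c y (smk y (pos y + 1)) := by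
            have h1 : pos y + 1 = 1 := by omega
            rw [h1]; exact hrel
          have := C.rel_replay_up h' x (by omega)
          rwa [hpx] at this
        refine ih ⟨hw1, hz', Or.inr ⟨by simp, by simp, fun _ => ⟨?_, by simp⟩⟩⟩
          (hx (smk x 1) hrelx hw1)
        -- Conn D (smk x 1)
        intro j hj
        simp only [pos_smk] at hj
        interval_cases j
        · simpa [← hpx] using hxD
        · simpa using hw1
      · -- pos z' = 0
        exact ih ⟨hxD, hz', Or.inl ⟨hpx, hz0, hcond⟩⟩ (hx x (C.rel_refl c x) hxD)
    · -- ¬p-case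
      by_cases hC : Conn D' z'
      · have hCy : Conn D' y := C.conn_step hrel hC hyD
        obtain ⟨hCx, hle⟩ := hcon hCy
        by_cases hz0 : pos z' = 0
        · -- z' is a p-state; the edge y→z' is the down edge 1→0
          have hpy1 : pos y = 1 := by
            rcases C.rel_cases hrel with rfl | h1 | h1 | h1
            · omega
            · exfalso; have := congrArg pos h1; rw [pos_smk] at this; omega
            · have := congrArg pos h1; rw [pos_smk z' _] at this; omega
            · omega
          have hpx1 : pos x = 1 := by omega
          have hx0 : smk x 0 ∈ D := hCx 0 (by omega)
          have hrelx : C.rel c x (smk x 0) := by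
            have h' : C.rel c y (smk y 0) := by
              have hsz : smk z' 0 = z' := by rw [← hz0]; exact smk_pos z'
              have hz'eq : z' = smk y 0 := by
                rcases C.rel_cases hrel with rfl | h1 | h1 | h1
                · omega
                · exfalso; have := congrArg pos h1; rw [pos_smk] at this; omega
                · rw [h1, smk_smk z' _ _, hsz]
                · omega
              rwa [hz'eq] at hrel
            exact C.rel_replay_down h' (by omega) x (by omega)
          refine ih ⟨hx0, hz', Or.inl ⟨by simp, hz0, fun _ => ?_⟩⟩ (hx (smk x 0) hrelx hx0)
          -- smk (smk x 0) 1 ∈ D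
          rw [smk_smk]
          have : smk x 1 = x := by rw [← hpx1, smk_pos]
          rwa [this]
        · rcases le_or_gt (pos x) (pos z') with hle' | hlt
          · exact ih ⟨hxD, hz', Or.inr ⟨hpx, hz0, fun _ => ⟨hCx, hle'⟩⟩⟩
              (hx x (C.rel_refl c x) hxD)
          · -- pos z' < pos x ≤ pos y, so the edge is the down edge and pos x = pos y
            have hdown : y = smk z' (pos z' + 1) := by
              rcases C.rel_cases hrel with rfl | h1 | h1 | h1
              · omega
              · exfalso; have := congrArg pos h1; rw [pos_smk] at this; omega
              · exact h1
              · omega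
            have hpyz : pos y = pos z' + 1 := by
              have := congrArg pos hdown; rwa [pos_smk z' _] at this
            have hpxy : pos x = pos y := by omega
            set e := pos z' with he
            have hx0 : smk x e ∈ D := hCx e (by omega)
            have hrelx : C.rel c x (smk x e) := by
              have h' : C.rel c y (smk y e) := by
                have : smk y e = z' := by rw [hdown, smk_smk z' _ _, he, smk_pos z']
                rwa [this]
              exact C.rel_replay_down h' (by omega) x (by omega)
            refine ih ⟨hx0, hz', Or.inr ⟨by simp; omega, hz0, fun _ => ⟨?_, by simp; exact le_of_eq he⟩⟩⟩
              (hx (smk x e) hrelx hx0)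
            exact hCx.smk (by omega)
      · -- ¬Conn D' z' : z' is not a p-state and the pair (x,z') is fine
        have hz0 : pos z' ≠ 0 := by
          intro h0
          exact hC (conn_of_pos_zero h0 hz')
        exact ih ⟨hxD, hz', Or.inr ⟨hpx, hz0, fun hc => absurd hc hC⟩⟩
          (hx x (C.rel_refl c x) hxD)

end Sat

end DCN
namespace DCN

variable {A P : Type} (C : Ctx A P)

/-- `n`-bisimulations at the level of the base model with explicit domains. -/
def NB : ℕ → Set W → Set W → (W → W → Prop) → Prop
  | 0, D1, D2, R => ∀ u v, R u v → u ∈ D1 ∧ v ∈ D2 ∧ ∀ q, u ∈ C.V q ↔ v ∈ C.V q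
  | (k+1), D1, D2, R => ∀ u v, R u v →
      (u ∈ D1 ∧ v ∈ D2 ∧ ∀ q, u ∈ C.V q ↔ v ∈ C.V q) ∧
      ∀ c, ∃ R' : W → W → Prop, (∀ x y, R x y → R' x y) ∧ NB k D1 D2 R' ∧
        (∀ u', C.rel c u u' → u' ∈ D1 → ∃ v', C.rel c v v' ∧ v' ∈ D2 ∧ R' u' v') ∧
        (∀ v', C.rel c v v' → v' ∈ D2 → ∃ u', C.rel c u u' ∧ u' ∈ D1 ∧ R' u' v')

lemma NB_atoms {k : ℕ} {D1 D2 : Set W} {R : W → W → Prop} (h : NB C k D1 D2 R)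
    {u v : W} (huv : R u v) : u ∈ D1 ∧ v ∈ D2 ∧ ∀ q, u ∈ C.V q ↔ v ∈ C.V q := by
  cases k with
  | zero => exact h u v huv
  | succ k => exact (h u v huv).1

lemma NB_mono {k : ℕ} {D1 D2 : Set W} {R R' : W → W → Prop}
    (hR : ∀ x y, R' x y → R x y) (h : NB C k D1 D2 R) : NB C k D1 D2 R' := by
  cases k with
  | zero => exact fun u v huv => h u v (hR u v huv)
  | succ k =>
    intro u v huv
    obtain ⟨h1, h2⟩ := h u v (hR u v huv)
    refine ⟨h1, fun c => ?_⟩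
    obtain ⟨R'', hsub, hNB, hforth, hback⟩ := h2 c
    exact ⟨R'', fun x y hxy => hsub x y (hR x y hxy), hNB, hforth, hback⟩

lemma NB_downward {D1 D2 : Set W} : ∀ {k : ℕ} {R : W → W → Prop},
    NB C (k+1) D1 D2 R → NB C k D1 D2 R := by
  intro k
  induction k with
  | zero => intro R h u v huv; exact (h u v huv).1
  | succ k ih =>
    intro R h u v huv
    obtain ⟨h1, h2⟩ := h u v huv
    refine ⟨h1, fun c => ?_⟩
    obtain ⟨R', hsub, hNB, hforth, hback⟩ := h2 c
    exact ⟨R', hsub, ih hNB, hforth, hback⟩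

lemma NB_le {D1 D2 : Set W} {k k' : ℕ} (hk : k' ≤ k) {R : W → W → Prop}
    (h : NB C k D1 D2 R) : NB C k' D1 D2 R := by
  obtain ⟨d, rfl⟩ : ∃ d, k = k' + d := ⟨k - k', by omega⟩
  clear hk
  induction d with
  | zero => exact h
  | succ d ih => exact ih (NB_downward C h)

lemma NB_symm {D1 D2 : Set W} : ∀ {k : ℕ} {R : W → W → Prop},
    NB C k D1 D2 R → NB C k D2 D1 (fun x y => R y x) := by
  intro k
  induction k with
  | zero => intro R h u v huv; obtain ⟨h1, h2, h3⟩ := h v u huv; exact ⟨h2, h1, fun q => (h3 q).symm⟩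
  | succ k ih =>
    intro R h u v huv
    obtain ⟨⟨m1, m2, m3⟩, h2⟩ := h v u huv
    refine ⟨⟨m2, m1, fun q => (m3 q).symm⟩, fun c => ?_⟩
    obtain ⟨R', hsub, hNB, hforth, hback⟩ := h2 c
    exact ⟨fun x y => R' y x, fun x y hxy => hsub y x hxy, ih hNB,
      fun u' hu' hmem => (hback u' hu' hmem).imp (fun v' hv' => ⟨hv'.1, hv'.2.1, hv'.2.2⟩),
      fun v' hv' hmem => (hforth v' hv' hmem).imp (fun u' hu' => ⟨hu'.1, hu'.2.1, hu'.2.2⟩)⟩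

/-- A single relation satisfying the back-and-forth conditions outright is an
`n`-bisimulation for every `n`. -/
lemma NB_const {D1 D2 : Set W} {S : W → W → Prop}
    (h1 : ∀ x y, S x y → x ∈ D1 ∧ y ∈ D2 ∧ ∀ q, x ∈ C.V q ↔ y ∈ C.V q)
    (h2 : ∀ x y, S x y → ∀ c x', C.rel c x x' → x' ∈ D1 →
      ∃ y', C.rel c y y' ∧ y' ∈ D2 ∧ S x' y')
    (h3 : ∀ x y, S x y → ∀ c y', C.rel c y y' → y' ∈ D2 →
      ∃ x', C.rel c x x' ∧ x' ∈ D1 ∧ S x' y') :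
    ∀ k, NB C k D1 D2 S := by
  intro k
  induction k with
  | zero => exact fun u v huv => h1 u v huv
  | succ k ih =>
    intro u v huv
    exact ⟨h1 u v huv, fun c =>
      ⟨S, fun _ _ h => h, ih, fun u' hr hm => h2 u v huv c u' hr hm,
        fun v' hr hm => h3 u v huv c v' hr hm⟩⟩

end DCN
namespace DCN

variable {A P : Type} (C : Ctx A P)

/-- If the extension of a positive formula contains a state at position 1
together with the position-0 state below it, then it is everything. -/
lemma posext_full {χ : PosForm A P} {D2 : Set W} {w1 : W} (h1 : pos w1 = 1)
    (hw1 : w1 ∈ D2) (hs1 : satP C χ D2 w1)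
    (hw0 : smk w1 0 ∈ D2) (hs0 : satP C χ D2 (smk w1 0)) :
    ∀ z ∈ D2, satP C χ D2 z := by
  intro z hz
  have hww : smk w1 1 = w1 := by rw [← h1, smk_pos]
  by_cases hp : pos z = 0
  · refine sim C χ ⟨hw0, hz, Or.inl ⟨by simp, hp, fun _ => ?_⟩⟩ hs0
    rw [smk_smk, hww]; exact hw1
  · refine sim C χ ⟨hw1, hz, Or.inr ⟨by omega, hp, fun _ => ⟨?_, by omega⟩⟩⟩ hs1
    intro j hj
    rw [h1] at hj
    interval_cases j
    · exact hw0
    · rw [hww]; exact hw1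

/-- The always-true positive formula. -/
def ptop : PosForm A P := .or (.atom C.p) (.natom C.p)

lemma satP_ptop (D : Set W) (x : W) : satP C (ptop C) D x := by
  by_cases h : x ∈ C.V C.p
  · exact Or.inl h
  · exact Or.inr h

lemma Eset_ptop (D : Set W) : {t | t ∈ D ∧ satP C (ptop C) D t} = D := by
  ext t
  exact ⟨fun h => h.1, fun h => ⟨h, satP_ptop C D t⟩⟩

/-- **The announcement-matching lemma.** -/
lemma matchQ {k : ℕ} {D1 D2 : Set W} {R : W → W → Prop} {u v : W} {χ : PosForm A P}
    (hNB : NB C k D1 D2 R) (huv : R u v) (hχ : satP C χ D2 v) :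
    ∃ χ' : PosForm A P, satP C χ' D1 u ∧ ∃ R' : W → W → Prop,
      NB C k {t | t ∈ D1 ∧ satP C χ' D1 t} {t | t ∈ D2 ∧ satP C χ D2 t} R' ∧ R' u v := by
  obtain ⟨huD, hvD, hatoms⟩ := NB_atoms C hNB huv
  set E2 : Set W := {t | t ∈ D2 ∧ satP C χ D2 t} with hE2
  by_cases hfull : ∃ w1 : W, pos w1 = 1 ∧ (w1 ∈ D2 ∧ satP C χ D2 w1) ∧
      (smk w1 0 ∈ D2 ∧ satP C χ D2 (smk w1 0))
  · -- the announced set is everything: announce ⊤ on the left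
    obtain ⟨w1, hp1, ⟨hw1, hs1⟩, hw0, hs0⟩ := hfull
    have hE : E2 = D2 := by
      ext t
      exact ⟨fun h => h.1, fun h => ⟨h, posext_full C hp1 hw1 hs1 hw0 hs0 t h⟩⟩
    refine ⟨ptop C, satP_ptop C D1 u, R, ?_, huv⟩
    rw [Eset_ptop, hE]
    exact hNB
  · by_cases hp : pos v = 0
    · -- `v` is a p-state whose announced component consists of p-states only
      refine ⟨.atom C.p, ?_, ?_⟩
      · have : v ∈ C.V C.p := (C.mem_Vp_iff v).mpr hp
        exact (hatoms C.p).mpr this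
      set S : W → W → Prop := fun x y =>
        (x ∈ D1 ∧ x ∈ C.V C.p) ∧ (y ∈ D2 ∧ satP C χ D2 y) ∧ pos y = 0 with hS
      refine ⟨S, ?_, ?_⟩
      · refine NB_const C ?_ ?_ ?_ k
        · rintro x y ⟨⟨hx1, hx2⟩, ⟨hy1, hy2⟩, hy0⟩
          refine ⟨⟨hx1, hx2⟩, ⟨hy1, hy2⟩, fun q => ?_⟩
          by_cases hq : q = C.p
          · subst hq
            simp only [C.mem_Vp_iff] at hx2 ⊢
            constructor <;> intro <;> omega
          · rw [C.hVq q hq]; simp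
        · rintro x y ⟨⟨hx1, hx2⟩, hy⟩ c x' hrel ⟨hx'1, hx'2⟩
          exact ⟨y, C.rel_refl c y, ⟨hy.1.1, hy.1.2⟩, ⟨⟨hx'1, hx'2⟩, hy⟩⟩
        · rintro x y ⟨hx, ⟨hy1, hy2⟩, hy0⟩ c y' hrel ⟨hy'1, hy'2⟩
          rcases C.rel_nbr_of_p hrel hy0 with rfl | rfl | hy'0
          · exact ⟨x, C.rel_refl c x, ⟨hx.1, hx.2⟩, ⟨hx, ⟨hy1, hy2⟩, hy0⟩⟩
          · exfalso
            apply hfull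
            refine ⟨smk y 1, by simp, ⟨hy'1, hy'2⟩, ?_, ?_⟩
            · rw [smk_smk, ← hy0, smk_pos]; exact hy1
            · rw [smk_smk, ← hy0, smk_pos]; exact hy2
          · exact ⟨x, C.rel_refl c x, ⟨hx.1, hx.2⟩, ⟨hx, ⟨hy'1, hy'2⟩, hy'0⟩⟩
      · refine ⟨⟨huD, ?_⟩, ⟨hvD, hχ⟩, hp⟩
        exact (hatoms C.p).mpr ((C.mem_Vp_iff v).mpr hp)
    · -- `v` is not a p-state and is disconnected from the p-states after the
      -- announcement
      have hunp : u ∉ C.V C.p := fun h => hp ((C.mem_Vp_iff v).mp ((hatoms C.p).mp h))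
      have hncon : ¬ Conn E2 v := by
        intro hc
        apply hfull
        have h1 := hc 1 (by omega)
        have h0 := hc 0 (by omega)
        refine ⟨smk v 1, by simp, h1, ?_, ?_⟩
        · rw [smk_smk]; exact h0.1
        · rw [smk_smk]; exact h0.2
      refine ⟨.natom C.p, hunp, ?_⟩
      set S : W → W → Prop := fun x y =>
        (x ∈ D1 ∧ x ∉ C.V C.p) ∧ (y ∈ D2 ∧ satP C χ D2 y) ∧ pos y ≠ 0 ∧ ¬ Conn E2 y
        with hS
      refine ⟨S, ?_, ⟨⟨huD, hunp⟩, ⟨hvD, hχ⟩, hp, hncon⟩⟩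
      refine NB_const C ?_ ?_ ?_ k
      · rintro x y ⟨⟨hx1, hx2⟩, ⟨hy1, hy2⟩, hy0, _⟩
        refine ⟨⟨hx1, hx2⟩, ⟨hy1, hy2⟩, fun q => ?_⟩
        by_cases hq : q = C.p
        · subst hq
          have : y ∉ C.V C.p := fun h => hy0 ((C.mem_Vp_iff y).mp h)
          exact ⟨fun h => absurd h hx2, fun h => absurd h this⟩
        · rw [C.hVq q hq]; simp
      · rintro x y ⟨hx, hy⟩ c x' hrel ⟨hx'1, hx'2⟩
        exact ⟨y, C.rel_refl c y, ⟨hy.1.1, hy.1.2⟩, ⟨⟨hx'1, hx'2⟩, hy⟩⟩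
      · rintro x y ⟨hx, ⟨hy1, hy2⟩, hy0, hyc⟩ c y' hrel ⟨hy'1, hy'2⟩
        have hC' : ¬ Conn E2 y' := fun h => hyc (C.conn_step hrel h ⟨hy1, hy2⟩)
        have hy'0 : pos y' ≠ 0 := fun h0 => hC' (conn_of_pos_zero h0 ⟨hy'1, hy'2⟩)
        exact ⟨x, C.rel_refl c x, ⟨hx.1, hx.2⟩, ⟨hx, ⟨hy'1, hy'2⟩, hy'0, hC'⟩⟩

end DCN
namespace DCN

variable {A P : Type} (C : Ctx A P)

/-- Relativization of an `n`-bisimulation by announcing a formula on both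
sides (costs the depth of the formula). -/
lemma annNB (ψ : Form A P)
    (Hψ : ∀ (k : ℕ) (D1 D2 : Set W) (R : W → W → Prop) (u v : W),
      NB C k D1 D2 R → R u v → Form.depth ψ ≤ k → (satB C ψ D1 u ↔ satB C ψ D2 v)) :
    ∀ (j : ℕ) (D1 D2 : Set W) (R : W → W → Prop), NB C (j + Form.depth ψ) D1 D2 R →
      NB C j {x | x ∈ D1 ∧ satB C ψ D1 x} {x | x ∈ D2 ∧ satB C ψ D2 x}
        (fun x y => R x y ∧ satB C ψ D1 x ∧ satB C ψ D2 y) := by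
  intro j
  induction j with
  | zero =>
    intro D1 D2 R h
    rintro u v ⟨hR, hs1, hs2⟩
    obtain ⟨m1, m2, m3⟩ := NB_atoms C h hR
    exact ⟨⟨m1, hs1⟩, ⟨m2, hs2⟩, m3⟩
  | succ j ih =>
    intro D1 D2 R h
    have h' : NB C ((j + Form.depth ψ) + 1) D1 D2 R := by
      have : (j + 1) + Form.depth ψ = (j + Form.depth ψ) + 1 := by omega
      rwa [this] at h
    rintro u v ⟨hR, hs1, hs2⟩
    obtain ⟨⟨m1, m2, m3⟩, hcl⟩ := h' u v hR
    refine ⟨⟨⟨m1, hs1⟩, ⟨m2, hs2⟩, m3⟩, fun c => ?_⟩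
    obtain ⟨R', hsub, hNB', hforth, hback⟩ := hcl c
    refine ⟨fun x y => R' x y ∧ satB C ψ D1 x ∧ satB C ψ D2 y,
      fun x y hxy => ⟨hsub x y hxy.1, hxy.2⟩, ih D1 D2 R' hNB', ?_, ?_⟩
    · rintro u' hrel ⟨hu'D, hsu'⟩
      obtain ⟨v', hrel', hv'D, hR'⟩ := hforth u' hrel hu'D
      have hsv' : satB C ψ D2 v' :=
        (Hψ (j + Form.depth ψ) D1 D2 R' u' v' hNB' hR' (by omega)).mp hsu'
      exact ⟨v', hrel', ⟨hv'D, hsv'⟩, hR', hsu', hsv'⟩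
    · rintro v' hrel ⟨hv'D, hsv'⟩
      obtain ⟨u', hrel', hu'D, hR'⟩ := hback v' hrel hv'D
      have hsu' : satB C ψ D1 u' :=
        (Hψ (j + Form.depth ψ) D1 D2 R' u' v' hNB' hR' (by omega)).mpr hsv'
      exact ⟨u', hrel', ⟨hu'D, hsu'⟩, hR', hsu', hsv'⟩

/-- **Main agreement theorem** at the level of the base model. -/
theorem agree : ∀ (φ : Form A P) (k : ℕ) (D1 D2 : Set W) (R : W → W → Prop) (u v : W),
    NB C k D1 D2 R → R u v → Form.depth φ ≤ k →
    (satB C φ D1 u ↔ satB C φ D2 v) := by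
  intro φ
  induction φ with
  | atom q =>
    intro k D1 D2 R u v hNB huv _
    exact (NB_atoms C hNB huv).2.2 q
  | neg ψ ih =>
    intro k D1 D2 R u v hNB huv hd
    exact not_congr (ih k D1 D2 R u v hNB huv hd)
  | and ψ ξ ih1 ih2 =>
    intro k D1 D2 R u v hNB huv hd
    simp only [Form.depth, max_le_iff] at hd
    exact and_congr (ih1 k D1 D2 R u v hNB huv hd.1) (ih2 k D1 D2 R u v hNB huv hd.2)
  | know c ψ ih =>
    intro k D1 D2 R u v hNB huv hd
    simp only [Form.depth] at hd
    cases k with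
    | zero => omega
    | succ k' =>
      obtain ⟨_, hcl⟩ := hNB u v huv
      obtain ⟨R', hsub, hNB', hforth, hback⟩ := hcl c
      constructor
      · intro hs t' hrel ht'
        obtain ⟨u', hrel', hu'D, hR'⟩ := hback t' hrel ht'
        exact (ih k' D1 D2 R' u' t' hNB' hR' (by omega)).mp (hs u' hrel' hu'D)
      · intro hs t' hrel ht'
        obtain ⟨v', hrel', hv'D, hR'⟩ := hforth t' hrel ht'
        exact (ih k' D1 D2 R' t' v' hNB' hR' (by omega)).mpr (hs v' hrel' hv'D)
  | ann ψ ξ ih1 ih2 =>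
    intro k D1 D2 R u v hNB huv hd
    simp only [Form.depth] at hd
    have hNB' : NB C (Form.depth ξ + Form.depth ψ) D1 D2 R := NB_le C (by omega) hNB
    have h2 := annNB C ψ ih1 (Form.depth ξ) D1 D2 R hNB'
    have hψiff := ih1 k D1 D2 R u v hNB huv (by omega)
    show (satB C ψ D1 u → satB C ξ _ u) ↔ (satB C ψ D2 v → satB C ξ _ v)
    constructor
    · intro h hs2
      have hs1 : satB C ψ D1 u := hψiff.mpr hs2
      exact (ih2 (Form.depth ξ) _ _ _ u v h2 ⟨huv, hs1, hs2⟩ le_rfl).mp (h hs1)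
    · intro h hs1
      have hs2 : satB C ψ D2 v := hψiff.mp hs1
      exact (ih2 (Form.depth ξ) _ _ _ u v h2 ⟨huv, hs1, hs2⟩ le_rfl).mpr (h hs2)
  | pbox ψ ih =>
    intro k D1 D2 R u v hNB huv hd
    simp only [Form.depth] at hd
    constructor
    · intro hs χ hχ
      obtain ⟨χ', hχ', R', hNB', hR'⟩ := matchQ C hNB huv hχ
      exact (ih k _ _ R' u v hNB' hR' hd).mp (hs χ' hχ')
    · intro hs χ hχ
      have hNBs : NB C k D2 D1 (fun x y => R y x) := NB_symm C hNB
      obtain ⟨χ', hχ', R', hNB', hR'⟩ := matchQ C hNBs huv hχ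
      exact (ih k _ _ R' v u hNB' hR' hd).mp (hs χ' hχ')

end DCN
namespace DCN

variable {A P : Type} (C : Ctx A P)

/-- Push a set of states of a restricted model down to the base model. -/
def Sub (D : Set W) (E : Set (Set.Elem D)) : Set W :=
  {x | ∃ hx : x ∈ D, (⟨x, hx⟩ : Set.Elem D) ∈ E}

lemma mem_Sub {D : Set W} {E : Set (Set.Elem D)} (s : Set.Elem D) :
    s.1 ∈ Sub D E ↔ s ∈ E := by
  constructor
  · rintro ⟨hx, hmem⟩
    have : (⟨s.1, hx⟩ : Set.Elem D) = s := Subtype.ext rfl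
    rwa [this] at hmem
  · intro h
    exact ⟨s.2, h⟩

lemma Sub_univ (D : Set W) : Sub D Set.univ = D := by
  ext x
  exact ⟨fun ⟨hx, _⟩ => hx, fun hx => ⟨hx, trivial⟩⟩

lemma trP {D : Set W} {h : D.Nonempty} (χ : PosForm A P) :
    ∀ (E : Set (Set.Elem D)) (s : Set.Elem D),
      PosForm.sat ((mdl C).restrict D h) χ E s ↔ satP C χ (Sub D E) s.1 := by
  induction χ with
  | atom q => intro E s; exact Iff.rfl
  | natom q => intro E s; exact Iff.rfl
  | and χ₁ χ₂ ih₁ ih₂ =>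
    intro E s
    exact and_congr (ih₁ E s) (ih₂ E s)
  | or χ₁ χ₂ ih₁ ih₂ =>
    intro E s
    exact or_congr (ih₁ E s) (ih₂ E s)
  | know c χ ih =>
    intro E s
    constructor
    · intro hs y hrel hy
      obtain ⟨hyD, hmem⟩ := hy
      exact (ih E ⟨y, hyD⟩).mp (hs ⟨y, hyD⟩ hrel hmem)
    · intro hs t hrel ht
      exact (ih E t).mpr (hs t.1 hrel ((mem_Sub t).mpr ht))

lemma trF {D : Set W} {h : D.Nonempty} (φ : Form A P) :
    ∀ (E : Set (Set.Elem D)) (s : Set.Elem D),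
      Form.sat ((mdl C).restrict D h) φ E s ↔ satB C φ (Sub D E) s.1 := by
  induction φ with
  | atom q => intro E s; exact Iff.rfl
  | neg ψ ih => intro E s; exact not_congr (ih E s)
  | and ψ ξ ih₁ ih₂ => intro E s; exact and_congr (ih₁ E s) (ih₂ E s)
  | know c ψ ih =>
    intro E s
    constructor
    · intro hs y hrel hy
      obtain ⟨hyD, hmem⟩ := hy
      exact (ih E ⟨y, hyD⟩).mp (hs ⟨y, hyD⟩ hrel hmem)
    · intro hs t hrel ht
      exact (ih E t).mpr (hs t.1 hrel ((mem_Sub t).mpr ht))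
  | ann ψ ξ ih₁ ih₂ =>
    intro E s
    have hset : Sub D {t | t ∈ E ∧ Form.sat ((mdl C).restrict D h) ψ E t} =
        {x | x ∈ Sub D E ∧ Form.sat (mdl C) ψ (Sub D E) x} := by
      ext x
      constructor
      · rintro ⟨hx, hmem, hsat⟩
        exact ⟨⟨hx, hmem⟩, ((ih₁ E ⟨x, hx⟩).mp hsat)⟩
      · rintro ⟨⟨hx, hmem⟩, hsat⟩
        exact ⟨hx, hmem, (ih₁ E ⟨x, hx⟩).mpr hsat⟩
    have hcongr : satB C ξ (Sub D {t | t ∈ E ∧ Form.sat ((mdl C).restrict D h) ψ E t}) s.1 ↔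
        satB C ξ {x | x ∈ Sub D E ∧ Form.sat (mdl C) ψ (Sub D E) x} s.1 := by rw [hset]
    constructor
    · intro hs h2
      have h3 := (ih₂ _ s).mp (hs ((ih₁ E s).mpr h2))
      exact hcongr.mp h3
    · intro hs h2
      exact (ih₂ _ s).mpr (hcongr.mpr (hs ((ih₁ E s).mp h2)))
  | pbox ψ ih =>
    intro E s
    constructor
    · intro hs χ hχ
      have hset : Sub D {t | t ∈ E ∧ PosForm.sat ((mdl C).restrict D h) χ E t} =
          {x | x ∈ Sub D E ∧ PosForm.sat (mdl C) χ (Sub D E) x} := by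
        ext x
        constructor
        · rintro ⟨hx, hmem, hsat⟩
          exact ⟨⟨hx, hmem⟩, ((trP C χ E ⟨x, hx⟩).mp hsat)⟩
        · rintro ⟨⟨hx, hmem⟩, hsat⟩
          exact ⟨hx, hmem, (trP C χ E ⟨x, hx⟩).mpr hsat⟩
      have hcongr : satB C ψ (Sub D {t | t ∈ E ∧ PosForm.sat ((mdl C).restrict D h) χ E t}) s.1 ↔
          satB C ψ {x | x ∈ Sub D E ∧ PosForm.sat (mdl C) χ (Sub D E) x} s.1 := by rw [hset]
      have h3 := (ih _ s).mp (hs χ ((trP C χ E s).mpr hχ))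
      exact hcongr.mp h3
    · intro hs χ hχ
      have hset : Sub D {t | t ∈ E ∧ PosForm.sat ((mdl C).restrict D h) χ E t} =
          {x | x ∈ Sub D E ∧ PosForm.sat (mdl C) χ (Sub D E) x} := by
        ext x
        constructor
        · rintro ⟨hx, hmem, hsat⟩
          exact ⟨⟨hx, hmem⟩, ((trP C χ E ⟨x, hx⟩).mp hsat)⟩
        · rintro ⟨⟨hx, hmem⟩, hsat⟩
          exact ⟨hx, hmem, (trP C χ E ⟨x, hx⟩).mpr hsat⟩
      have hcongr : satB C ψ (Sub D {t | t ∈ E ∧ PosForm.sat ((mdl C).restrict D h) χ E t}) s.1 ↔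
          satB C ψ {x | x ∈ Sub D E ∧ PosForm.sat (mdl C) χ (Sub D E) x} s.1 := by rw [hset]
      exact (ih _ s).mpr (hcongr.mpr (hs χ ((trP C χ E s).mp hχ)))

lemma trNB {D1 D2 : Set W} {h1 : D1.Nonempty} {h2 : D2.Nonempty} :
    ∀ (k : ℕ) (R : Set.Elem D1 → Set.Elem D2 → Prop),
      IsNBisim ((mdl C).restrict D1 h1) ((mdl C).restrict D2 h2) k R →
      NB C k D1 D2 (fun x y => ∃ hx : x ∈ D1, ∃ hy : y ∈ D2, R ⟨x, hx⟩ ⟨y, hy⟩) := by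
  intro k
  induction k with
  | zero =>
    rintro R ⟨_, hmain⟩ u v ⟨hu, hv, hR⟩
    exact ⟨hu, hv, fun q => hmain ⟨u, hu⟩ ⟨v, hv⟩ hR q⟩
  | succ k ih =>
    rintro R ⟨_, hmain⟩ u v ⟨hu, hv, hR⟩
    obtain ⟨hatoms, hcl⟩ := hmain ⟨u, hu⟩ ⟨v, hv⟩ hR
    refine ⟨⟨hu, hv, fun q => hatoms q⟩, fun c => ?_⟩
    obtain ⟨R', hsub, hNB', hforth, hback⟩ := hcl c
    refine ⟨fun x y => ∃ hx : x ∈ D1, ∃ hy : y ∈ D2, R' ⟨x, hx⟩ ⟨y, hy⟩, ?_, ih R' hNB', ?_, ?_⟩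
    · rintro x y ⟨hx, hy, hxy⟩
      exact ⟨hx, hy, hsub _ _ hxy⟩
    · intro u' hrel hu'
      obtain ⟨t', hrel', hR'⟩ := hforth ⟨u', hu'⟩ hrel
      exact ⟨t'.1, hrel', t'.2, hu', t'.2, hR'⟩
    · intro v' hrel hv'
      obtain ⟨s', hrel', hR'⟩ := hback ⟨v', hv'⟩ hrel
      exact ⟨s'.1, hrel', s'.2, s'.2, hv', hR'⟩

end DCN

/-- Let `M^ω` be the two-agent model on ℕ ⊎ ℕ' where `∼_a`
is the reflexive-symmetric closure of `{(2i, 2i+1)} ∪ {(2i', (2i+1)')}`,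
`∼_b` is the reflexive-symmetric closure of
`{(2i+1, 2i+2)} ∪ {((2i+1)', (2i+2)')} ∪ {(0, 0')}`, and `V(p) = {0, 0'}`
(all other atoms being false everywhere). Then for all restrictions `M`, `N`
of `M^ω`, states `s` of `M` and `t` of `N`, and `k ∈ ℕ`: if `M_s` and `N_t`
are `k`-bisimilar, then they agree on every L_PAPAL formula of epistemic
depth at most `k`. -/
theorem double_chain_nbisim_agreement
    (A P : Type) (a b : A) (hab : a ≠ b) (htwo : ∀ c : A, c = a ∨ c = b) (p : P)
    (rel : A → (ℕ ⊕ ℕ) → (ℕ ⊕ ℕ) → Prop) (hequiv : ∀ c, Equivalence (rel c))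
    (hrela : ∀ s t : ℕ ⊕ ℕ, rel a s t ↔ (s = t ∨ ∃ i : ℕ,
      (s = Sum.inl (2*i) ∧ t = Sum.inl (2*i+1)) ∨
      (t = Sum.inl (2*i) ∧ s = Sum.inl (2*i+1)) ∨
      (s = Sum.inr (2*i) ∧ t = Sum.inr (2*i+1)) ∨
      (t = Sum.inr (2*i) ∧ s = Sum.inr (2*i+1))))
    (hrelb : ∀ s t : ℕ ⊕ ℕ, rel b s t ↔ (s = t ∨
      (s = Sum.inl 0 ∧ t = Sum.inr 0) ∨ (t = Sum.inl 0 ∧ s = Sum.inr 0) ∨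
      ∃ i : ℕ,
      (s = Sum.inl (2*i+1) ∧ t = Sum.inl (2*i+2)) ∨
      (t = Sum.inl (2*i+1) ∧ s = Sum.inl (2*i+2)) ∨
      (s = Sum.inr (2*i+1) ∧ t = Sum.inr (2*i+2)) ∨
      (t = Sum.inr (2*i+1) ∧ s = Sum.inr (2*i+2))))
    (V : P → Set (ℕ ⊕ ℕ))
    (hVp : V p = {Sum.inl 0, Sum.inr 0})
    (hVq : ∀ q : P, q ≠ p → V q = ∅)
    (D₁ D₂ : Set (ℕ ⊕ ℕ)) (h₁ : D₁.Nonempty) (h₂ : D₂.Nonempty)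
    (s : ((doubleChainModel A P rel hequiv V).restrict D₁ h₁).S)
    (t : ((doubleChainModel A P rel hequiv V).restrict D₂ h₂).S)
    (k : ℕ)
    (hbis : ∃ R, IsNBisim ((doubleChainModel A P rel hequiv V).restrict D₁ h₁)
        ((doubleChainModel A P rel hequiv V).restrict D₂ h₂) k R ∧ R s t)
    (φ : Form A P) (hd : Form.depth φ ≤ k) :
    Sat ((doubleChainModel A P rel hequiv V).restrict D₁ h₁) s φ ↔
      Sat ((doubleChainModel A P rel hequiv V).restrict D₂ h₂) t φ := by
  let C : DCN.Ctx A P := ⟨a, b, htwo, p, rel, hequiv, hrela, hrelb, V, hVp, hVq⟩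
  obtain ⟨R, hR, hst⟩ := hbis
  have hNB := DCN.trNB C (h1 := h₁) (h2 := h₂) k R hR
  have hlift : (fun x y => ∃ hx : x ∈ D₁, ∃ hy : y ∈ D₂, R ⟨x, hx⟩ ⟨y, hy⟩) s.1 t.1 :=
    ⟨s.2, t.2, hst⟩
  have h := DCN.agree C φ k D₁ D₂ _ s.1 t.1 hNB hlift hd
  have h1 : Sat ((doubleChainModel A P rel hequiv V).restrict D₁ h₁) s φ ↔
      DCN.satB C φ D₁ s.1 := by
    have h1' := DCN.trF C (h := h₁) φ Set.univ s
    rwa [DCN.Sub_univ] at h1'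
  have h2 : Sat ((doubleChainModel A P rel hequiv V).restrict D₂ h₂) t φ ↔
      DCN.satB C φ D₂ t.1 := by
    have h2' := DCN.trF C (h := h₂) φ Set.univ t
    rwa [DCN.Sub_univ] at h2'
  rw [h1, h2]
  exact h
end
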